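/- Let n ≥ 1, let T^n = (S¹)^n be the n-fold product of the unit circle S¹ = {z ∈ ℂ : |z| = 1}, and let the group G = {ε ∈ {±1}^n : ∏ᵢ εᵢ = 1} act on T^n coordinatewise, where εᵢ = 1 acts as the identity on the i-th coordinate and εᵢ = −1 acts by complex conjugation zᵢ ↦ conj(zᵢ). Then the orbit space T^n / G, with the quotient topology, is homeomorphic to the unit sphere S^n ⊂ ℝ^(n+1). -/

import Mathlib

open Finset Complex in
/-- The invariant map `z ↦ (Re z₁, …, Re zₙ, ∏ᵢ Im zᵢ)` from the torus to `ℝ^(n+1)`. -/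
noncomputable def fmapTorus (n : ℕ) (z : Fin n → Metric.sphere (0:ℂ) 1) :
    EuclideanSpace ℝ (Fin (n+1)) :=
  (EuclideanSpace.equiv (Fin (n+1)) ℝ).symm
    (Fin.snoc (fun i => ((z i : ℂ)).re) (∏ i, ((z i : ℂ)).im))

section aux
open Finset Complex

lemma fmapTorus_castSucc {n : ℕ} (z : Fin n → Metric.sphere (0:ℂ) 1) (i : Fin n) :
    fmapTorus n z i.castSucc = ((z i : ℂ)).re := by
  simp [fmapTorus, EuclideanSpace.equiv]

lemma fmapTorus_last {n : ℕ} (z : Fin n → Metric.sphere (0:ℂ) 1) :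
    fmapTorus n z (Fin.last n) = ∏ i, ((z i : ℂ)).im := by
  simp [fmapTorus, EuclideanSpace.equiv]

lemma circle_sq {z : ℂ} (hz : z ∈ Metric.sphere (0:ℂ) 1) : z.re^2 + z.im^2 = 1 := by
  have h : ‖z‖ = 1 := mem_sphere_zero_iff_norm.mp hz
  have h2 : ‖z‖ ^ 2 = Complex.normSq z := Complex.sq_norm z
  rw [h] at h2
  simp [Complex.normSq_apply] at h2
  nlinarith

lemma fmapTorus_continuous (n : ℕ) : Continuous (fmapTorus n) := by
  apply (EuclideanSpace.equiv (Fin (n+1)) ℝ).symm.continuous.comp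
  apply continuous_pi
  intro j
  induction j using Fin.lastCases with
  | last =>
    simp only [Fin.snoc_last]
    exact continuous_finset_prod _ fun i _ =>
      Complex.continuous_im.comp (continuous_subtype_val.comp (continuous_apply i))
  | cast i =>
    simp only [Fin.snoc_castSucc]
    exact Complex.continuous_re.comp (continuous_subtype_val.comp (continuous_apply i))

lemma fmapTorus_ne_zero {n : ℕ} (z : Fin n → Metric.sphere (0:ℂ) 1) : fmapTorus n z ≠ 0 := by
  intro h
  have hlast : (∏ i, ((z i : ℂ)).im) = 0 := by
    rw [← fmapTorus_last z, h]; rfl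
  obtain ⟨j, _, hj⟩ := Finset.prod_eq_zero_iff.mp hlast
  have hre : ((z j : ℂ)).re = 0 := by rw [← fmapTorus_castSucc z j, h]; rfl
  have := circle_sq (z j).2
  rw [hre, hj] at this
  norm_num at this

lemma rel_of_fmapTorus_eq {n : ℕ} (z w : Fin n → Metric.sphere (0:ℂ) 1)
    (h : fmapTorus n z = fmapTorus n w) :
    ∃ ε : Fin n → ℤˣ, (∏ i, ε i) = 1 ∧
      ∀ i, (w i : ℂ) = if ε i = 1 then (z i : ℂ) else starRingEnd ℂ (z i) := by
  have hre : ∀ i, ((w i : ℂ)).re = ((z i : ℂ)).re := by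
    intro i; rw [← fmapTorus_castSucc z i, ← fmapTorus_castSucc w i, h]
  have him2 : ∀ i, ((w i : ℂ)).im ^ 2 = ((z i : ℂ)).im ^ 2 := by
    intro i
    have h1 := circle_sq (z i).2
    have h2 := circle_sq (w i).2
    have hr2 : ((w i : ℂ)).re ^ 2 = ((z i : ℂ)).re ^ 2 := by rw [hre i]
    linarith
  have hP : (∏ i, ((z i : ℂ)).im) = ∏ i, ((w i : ℂ)).im := by
    rw [← fmapTorus_last z, ← fmapTorus_last w, h]
  set ε : Fin n → ℤˣ := fun i => if ((w i : ℂ)).im = ((z i : ℂ)).im then 1 else -1 with hε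
  have himcase : ∀ i, ((w i : ℂ)).im = ((z i : ℂ)).im ∨
      (((w i : ℂ)).im = -((z i : ℂ)).im ∧ ((w i : ℂ)).im ≠ ((z i : ℂ)).im) := by
    intro i
    by_cases hi : ((w i : ℂ)).im = ((z i : ℂ)).im
    · exact Or.inl hi
    · refine Or.inr ⟨?_, hi⟩
      have := him2 i
      have hfac : (((w i : ℂ)).im - ((z i : ℂ)).im) * (((w i : ℂ)).im + ((z i : ℂ)).im) = 0 := by
        nlinarith
      rcases mul_eq_zero.mp hfac with h' | h'
      · exact absurd (by linarith) hi
      · linarith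
  have hact : ∀ i, (w i : ℂ) = if ε i = 1 then (z i : ℂ) else starRingEnd ℂ (z i) := by
    intro i
    rcases himcase i with hi | ⟨hi, hne⟩
    · rw [hε]; simp only [hi, if_pos rfl, if_pos]
      exact Complex.ext (hre i) hi
    · have hεi : ε i = -1 := by rw [hε]; simp only [if_neg hne]
      rw [hεi, if_neg (by decide : (-1 : ℤˣ) ≠ 1)]
      apply Complex.ext
      · rw [Complex.conj_re]; exact hre i
      · rw [Complex.conj_im]; exact hi
  have hfact : ∀ i, ((w i : ℂ)).im = ((ε i : ℤ) : ℝ) * ((z i : ℂ)).im := by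
    intro i
    rcases himcase i with hi | ⟨hi, hne⟩
    · have hεi : ε i = 1 := by rw [hε]; simp only [if_pos hi]
      rw [hεi, hi]; norm_num
    · have hεi : ε i = -1 := by rw [hε]; simp only [if_neg hne]
      rw [hεi, hi]; push_cast; ring
  have hprodw : (∏ i, ((w i : ℂ)).im) = (∏ i, ((ε i : ℤ) : ℝ)) * ∏ i, ((z i : ℂ)).im := by
    rw [← Finset.prod_mul_distrib]
    exact Finset.prod_congr rfl fun i _ => hfact i
  have hcast : (∏ i, ((ε i : ℤ) : ℝ)) = (((∏ i, ε i : ℤˣ) : ℤ) : ℝ) := by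
    rw [Units.coe_prod, Int.cast_prod]
  by_cases hPz : (∏ i, ((z i : ℂ)).im) = 0
  · obtain ⟨j, _, hj⟩ := Finset.prod_eq_zero_iff.mp hPz
    rcases Int.units_eq_one_or (∏ i, ε i) with hone | hmone
    · exact ⟨ε, hone, hact⟩
    · refine ⟨Function.update ε j (-(ε j)), ?_, ?_⟩
      · rw [Finset.prod_update_of_mem (Finset.mem_univ j)]
        rw [← Finset.mul_prod_erase Finset.univ ε (Finset.mem_univ j)] at hmone
        rw [show Finset.univ \ {j} = Finset.univ.erase j by
          rw [Finset.sdiff_singleton_eq_erase]]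
        rw [neg_mul]
        rw [hmone]
        rfl
      · intro i
        by_cases hij : i = j
        · subst hij
          have hwim : ((w i : ℂ)).im = 0 := by
            have := him2 i; rw [hj] at this; nlinarith
          have hwz : (w i : ℂ) = (z i : ℂ) := Complex.ext (hre i) (by rw [hwim, hj])
          have hzc : (z i : ℂ) = starRingEnd ℂ (z i) := by
            apply Complex.ext
            · rw [Complex.conj_re]
            · rw [Complex.conj_im, hj, neg_zero]
          split <;> rw [hwz]
          exact hzc
        · rw [Function.update_of_ne hij]
          exact hact i
  · have h1 : (((∏ i, ε i : ℤˣ) : ℤ) : ℝ) * ∏ i, ((z i : ℂ)).im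
        = 1 * ∏ i, ((z i : ℂ)).im := by
      rw [one_mul, ← hcast]
      linarith [hP, hprodw]
    have h2 : (((∏ i, ε i : ℤˣ) : ℤ) : ℝ) = 1 := mul_right_cancel₀ hPz h1
    have h3 : ((∏ i, ε i : ℤˣ) : ℤ) = 1 := by exact_mod_cast h2
    exact ⟨ε, Units.ext h3, hact⟩

lemma key_lambda {n : ℕ} (a : Fin n → ℝ) (l : ℝ) (hl : 1 ≤ l)
    (h1 : ∀ i, a i ^ 2 ≤ 1) (h2 : ∀ i, (l * a i) ^ 2 ≤ 1)
    (heq : ∏ i, (1 - (l * a i) ^ 2) = l ^ 2 * ∏ i, (1 - a i ^ 2)) : l = 1 := by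
  have hl2 : 1 ≤ l ^ 2 := by nlinarith
  by_cases hex : ∃ j, a j ^ 2 = 1
  · obtain ⟨j, hj⟩ := hex
    have := h2 j
    nlinarith
  · push_neg at hex
    have hQpos : 0 < ∏ i, (1 - a i ^ 2) := by
      apply Finset.prod_pos
      intro i _
      have : a i ^ 2 < 1 := lt_of_le_of_ne (h1 i) (hex i)
      linarith
    have hle : ∏ i, (1 - (l * a i) ^ 2) ≤ ∏ i, (1 - a i ^ 2) := by
      apply Finset.prod_le_prod
      · intro i _; nlinarith [h2 i]
      · intro i _
        have : 0 ≤ (l ^ 2 - 1) * a i ^ 2 := mul_nonneg (by linarith) (sq_nonneg _)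
        nlinarith
    rw [heq] at hle
    have : l ^ 2 ≤ 1 := by
      have := (mul_le_mul_iff_of_pos_right hQpos).mp
        (by linarith [hle] : l ^ 2 * ∏ i, (1 - a i ^ 2) ≤ 1 * ∏ i, (1 - a i ^ 2))
      linarith
    nlinarith

lemma lambda_one {n : ℕ} (z w : Fin n → Metric.sphere (0:ℂ) 1) (l : ℝ) (hl : 1 ≤ l)
    (h : fmapTorus n z = l • fmapTorus n w) : l = 1 := by
  have hsmul : ∀ j, (l • fmapTorus n w) j = l * fmapTorus n w j := fun j => rfl
  have hre : ∀ i, ((z i : ℂ)).re = l * ((w i : ℂ)).re := by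
    intro i
    rw [← fmapTorus_castSucc z i, ← fmapTorus_castSucc w i, h, hsmul]
  have hP : (∏ i, ((z i : ℂ)).im) = l * ∏ i, ((w i : ℂ)).im := by
    rw [← fmapTorus_last z, ← fmapTorus_last w, h, hsmul]
  apply key_lambda (fun i => ((w i : ℂ)).re) l hl
  · intro i
    have := circle_sq (w i).2
    nlinarith [sq_nonneg ((w i : ℂ)).im]
  · intro i
    have := circle_sq (z i).2
    have h' : (l * ((w i : ℂ)).re) ^ 2 = ((z i : ℂ)).re ^ 2 := by rw [hre i]
    nlinarith [sq_nonneg ((z i : ℂ)).im]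
  · have e1 : ∏ i, (1 - (l * ((w i : ℂ)).re) ^ 2) = ∏ i, ((z i : ℂ)).im ^ 2 := by
      refine Finset.prod_congr rfl fun i _ => ?_
      have := circle_sq (z i).2
      rw [← hre i]
      linarith
    have e2 : ∏ i, (1 - ((w i : ℂ)).re ^ 2) = ∏ i, ((w i : ℂ)).im ^ 2 := by
      refine Finset.prod_congr rfl fun i _ => ?_
      have := circle_sq (w i).2
      linarith
    rw [e1, e2, Finset.prod_pow, Finset.prod_pow, hP]
    ring

lemma fmapTorus_eq_of_norm {n : ℕ} (z w : Fin n → Metric.sphere (0:ℂ) 1)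
    (h : ‖fmapTorus n z‖⁻¹ • fmapTorus n z = ‖fmapTorus n w‖⁻¹ • fmapTorus n w) :
    fmapTorus n z = fmapTorus n w := by
  set cz := ‖fmapTorus n z‖ with hcz
  set cw := ‖fmapTorus n w‖ with hcw
  have hczpos : 0 < cz := norm_pos_iff.mpr (fmapTorus_ne_zero z)
  have hcwpos : 0 < cw := norm_pos_iff.mpr (fmapTorus_ne_zero w)
  have hzw : fmapTorus n z = (cz * cw⁻¹) • fmapTorus n w := by
    calc fmapTorus n z = cz • (cz⁻¹ • fmapTorus n z) := by
          rw [smul_smul, mul_inv_cancel₀ hczpos.ne', one_smul]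
      _ = cz • (cw⁻¹ • fmapTorus n w) := by rw [h]
      _ = (cz * cw⁻¹) • fmapTorus n w := by rw [smul_smul]
  have hwz : fmapTorus n w = (cw * cz⁻¹) • fmapTorus n z := by
    calc fmapTorus n w = cw • (cw⁻¹ • fmapTorus n w) := by
          rw [smul_smul, mul_inv_cancel₀ hcwpos.ne', one_smul]
      _ = cw • (cz⁻¹ • fmapTorus n z) := by rw [← h]
      _ = (cw * cz⁻¹) • fmapTorus n z := by rw [smul_smul]
  rcases le_total cw cz with hc | hc
  · have h1 : 1 ≤ cz * cw⁻¹ := by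
      rw [← div_eq_mul_inv, le_div_iff₀ hcwpos, one_mul]; exact hc
    have := lambda_one z w _ h1 hzw
    rw [this, one_smul] at hzw
    exact hzw
  · have h1 : 1 ≤ cw * cz⁻¹ := by
      rw [← div_eq_mul_inv, le_div_iff₀ hczpos, one_mul]; exact hc
    have := lambda_one w z _ h1 hwz
    rw [this, one_smul] at hwz
    exact hwz.symm

lemma exists_t_torus {n : ℕ} (hn : 1 ≤ n) (U : Fin n → ℝ) (v : ℝ)
    (hsum : (∑ i, U i ^ 2) + v ^ 2 = 1) :
    ∃ t : ℝ, 0 < t ∧ (∀ i, t ^ 2 * U i ^ 2 ≤ 1) ∧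
      ∏ i, (1 - t ^ 2 * U i ^ 2) = t ^ 2 * v ^ 2 := by
  haveI : Nonempty (Fin n) := ⟨⟨0, hn⟩⟩
  by_cases hv : v = 0
  · have hne : (Finset.univ : Finset (Fin n)).Nonempty := Finset.univ_nonempty
    set m := Finset.univ.sup' hne (fun i => U i ^ 2) with hm
    have hmax : ∀ i, U i ^ 2 ≤ m :=
      fun i => Finset.le_sup' (fun i => U i ^ 2) (Finset.mem_univ i)
    obtain ⟨j0, -, hj0⟩ := Finset.exists_mem_eq_sup' hne (fun i => U i ^ 2)
    have hmpos : 0 < m := by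
      by_contra hc
      push_neg at hc
      have : ∀ i ∈ Finset.univ, U i ^ 2 = 0 := fun i _ =>
        le_antisymm (le_trans (hmax i) hc) (sq_nonneg _)
      have hs : (∑ i, U i ^ 2) = 0 := Finset.sum_eq_zero this
      rw [hs, hv] at hsum
      norm_num at hsum
    refine ⟨(Real.sqrt m)⁻¹, by positivity, ?_, ?_⟩
    · intro i
      have ht2 : ((Real.sqrt m)⁻¹) ^ 2 = m⁻¹ := by
        rw [inv_pow, Real.sq_sqrt hmpos.le]
      rw [ht2, inv_mul_le_iff₀ hmpos]
      simpa using hmax i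
    · have ht2 : ((Real.sqrt m)⁻¹) ^ 2 = m⁻¹ := by
        rw [inv_pow, Real.sq_sqrt hmpos.le]
      rw [hv]
      rw [ht2]
      have : (1 : ℝ) - m⁻¹ * U j0 ^ 2 = 0 := by
        rw [← hj0, ← hm, inv_mul_cancel₀ hmpos.ne', sub_self]
      rw [Finset.prod_eq_zero (Finset.mem_univ j0) this]
      ring
  · set g : ℝ → ℝ := fun t => (∏ i, max (1 - t ^ 2 * U i ^ 2) 0) - t ^ 2 * v ^ 2 with hg
    have hcont : Continuous g := by
      apply Continuous.sub
      · apply continuous_finset_prod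
        intro i _
        exact (continuous_const.sub ((continuous_pow 2).mul continuous_const)).max
          continuous_const
      · exact (continuous_pow 2).mul continuous_const
    have hg0 : g 0 = 1 := by simp [hg]
    set T := |v|⁻¹ with hT
    have hvpos : 0 < |v| := abs_pos.mpr hv
    have hTpos : 0 < T := by positivity
    have hgT : g T ≤ 0 := by
      have h1 : (∏ i, max (1 - T ^ 2 * U i ^ 2) 0) ≤ 1 := by
        apply Finset.prod_le_one
        · intro i _; exact le_max_right _ _
        · intro i _
          apply max_le _ zero_le_one
          nlinarith [sq_nonneg (T * U i)]
      have h2 : T ^ 2 * v ^ 2 = 1 := by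
        rw [hT, inv_pow, ← _root_.sq_abs v]
        field_simp
      simp only [hg]
      linarith
    have hmem : (0 : ℝ) ∈ Set.Icc (g T) (g 0) := ⟨hgT, by rw [hg0]; norm_num⟩
    obtain ⟨t, htIcc, htval⟩ := intermediate_value_Icc' hTpos.le hcont.continuousOn hmem
    have htne : t ≠ 0 := by
      intro h
      rw [h, hg0] at htval
      norm_num at htval
    have htpos : 0 < t := lt_of_le_of_ne htIcc.1 (Ne.symm htne)
    have hprod : (∏ i, max (1 - t ^ 2 * U i ^ 2) 0) = t ^ 2 * v ^ 2 := by
      have := htval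
      simp only [hg] at this
      linarith
    have hrhs : 0 < t ^ 2 * v ^ 2 := by positivity
    have hfac : ∀ i, 0 < 1 - t ^ 2 * U i ^ 2 := by
      intro i
      by_contra hc
      push_neg at hc
      have h0 : max (1 - t ^ 2 * U i ^ 2) 0 = 0 := max_eq_right hc
      have h00 : (∏ i, max (1 - t ^ 2 * U i ^ 2) 0) = 0 :=
        Finset.prod_eq_zero (Finset.mem_univ i) h0
      rw [hprod] at h00
      linarith
    refine ⟨t, htpos, fun i => by linarith [hfac i], ?_⟩
    rw [← hprod]
    exact Finset.prod_congr rfl fun i _ => (max_eq_left (hfac i).le).symm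

lemma exists_fmapTorus_smul {n : ℕ} (hn : 1 ≤ n) (u : EuclideanSpace ℝ (Fin (n+1)))
    (hu : ∑ j, u j ^ 2 = 1) :
    ∃ (z : Fin n → Metric.sphere (0:ℂ) 1) (t : ℝ), 0 < t ∧ fmapTorus n z = t • u := by
  set U : Fin n → ℝ := fun i => u i.castSucc with hU
  set v := u (Fin.last n) with hv
  have hsum : (∑ i, U i ^ 2) + v ^ 2 = 1 := by
    rw [← hu, Fin.sum_univ_castSucc]
  obtain ⟨t, htpos, hle, hprod⟩ := exists_t_torus hn U v hsum
  set c : Fin n → ℝ :=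
    fun i => if i = (⟨0, hn⟩ : Fin n) then (if v < 0 then -1 else 1) else 1 with hc
  have hcsq : ∀ i, c i ^ 2 = 1 := by
    intro i; rw [hc]; simp only; split_ifs <;> norm_num
  have hnonneg : ∀ i : Fin n, (0:ℝ) ≤ 1 - t ^ 2 * U i ^ 2 := fun i => by linarith [hle i]
  have hzmem : ∀ i : Fin n,
      (⟨t * U i, c i * Real.sqrt (1 - t ^ 2 * U i ^ 2)⟩ : ℂ) ∈ Metric.sphere (0:ℂ) 1 := by
    intro i
    rw [mem_sphere_zero_iff_norm]
    have hns : Complex.normSq ⟨t * U i, c i * Real.sqrt (1 - t ^ 2 * U i ^ 2)⟩ = 1 := by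
      rw [Complex.normSq_mk]
      have hs := Real.sq_sqrt (hnonneg i)
      have hcs := hcsq i
      nlinarith [hs, hcs]
    rw [Complex.norm_def, hns, Real.sqrt_one]
  refine ⟨fun i => ⟨_, hzmem i⟩, t, htpos, ?_⟩
  ext j
  have hsmul : ∀ j, (t • u) j = t * u j := fun j => rfl
  induction j using Fin.lastCases with
  | last =>
    rw [fmapTorus_last, hsmul]
    show (∏ i, c i * Real.sqrt (1 - t ^ 2 * U i ^ 2)) = t * v
    rw [Finset.prod_mul_distrib]
    have hprodc : (∏ i, c i) = if v < 0 then -1 else 1 := by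
      rw [Finset.prod_eq_single (⟨0, hn⟩ : Fin n)]
      · simp [hc]
      · intro b _ hb; rw [hc]; simp only [if_neg hb]
      · intro h; exact absurd (Finset.mem_univ _) h
    set S := ∏ i, Real.sqrt (1 - t ^ 2 * U i ^ 2) with hSdef
    have hSnn : 0 ≤ S := Finset.prod_nonneg fun i _ => Real.sqrt_nonneg _
    have hS2 : S ^ 2 = (t * v) ^ 2 := by
      rw [hSdef, ← Finset.prod_pow]
      rw [Finset.prod_congr rfl fun i _ => Real.sq_sqrt (hnonneg i)]
      rw [hprod]; ring
    have hS : S = |t * v| := by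
      rw [← Real.sqrt_sq hSnn, hS2, Real.sqrt_sq_eq_abs]
    rw [hprodc, hS]
    split_ifs with h
    · rw [_root_.abs_of_neg (mul_neg_of_pos_of_neg htpos h)]; ring
    · push_neg at h
      rw [_root_.abs_of_nonneg (mul_nonneg htpos.le h)]; ring
  | cast i =>
    rw [fmapTorus_castSucc, hsmul]

/-- The normalized invariant map into the sphere. -/
noncomputable def fsphTorus (n : ℕ) (z : Fin n → Metric.sphere (0:ℂ) 1) :
    Metric.sphere (0 : EuclideanSpace ℝ (Fin (n+1))) 1 :=
  ⟨‖fmapTorus n z‖⁻¹ • fmapTorus n z, by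
    rw [mem_sphere_zero_iff_norm, norm_smul, norm_inv, norm_norm,
      inv_mul_cancel₀ (norm_ne_zero_iff.mpr (fmapTorus_ne_zero z))]⟩

lemma fsphTorus_continuous (n : ℕ) : Continuous (fsphTorus n) := by
  apply Continuous.subtype_mk
  exact ((fmapTorus_continuous n).norm.inv₀
    fun z => norm_ne_zero_iff.mpr (fmapTorus_ne_zero z)).smul (fmapTorus_continuous n)

end aux

/-- Let the group `G = {ε ∈ {±1}^n : ∏ εᵢ = 1}` act on the torus `T^n = (S¹)^n`
coordinatewise, with `εᵢ = 1` acting as the identity and `εᵢ = -1` acting by complex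
conjugation on the `i`-th coordinate.  Then the orbit space `T^n / G`, with the quotient
topology, is homeomorphic to the unit sphere `S^n ⊂ ℝ^(n+1)`. -/
theorem torus_quotient_by_even_conjugations_homeo_sphere
    (n : ℕ) (hn : 1 ≤ n) :
    Nonempty ((Quot fun z w : Fin n → Metric.sphere (0 : ℂ) 1 =>
        ∃ ε : Fin n → ℤˣ, (∏ i, ε i) = 1 ∧
          ∀ i, (w i : ℂ) = if ε i = 1 then (z i : ℂ) else starRingEnd ℂ (z i)) ≃ₜ
      Metric.sphere (0 : EuclideanSpace ℝ (Fin (n + 1))) 1) := by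
  have hresp : ∀ z w : Fin n → Metric.sphere (0 : ℂ) 1,
      (∃ ε : Fin n → ℤˣ, (∏ i, ε i) = 1 ∧
        ∀ i, (w i : ℂ) = if ε i = 1 then (z i : ℂ) else starRingEnd ℂ (z i)) →
      fsphTorus n z = fsphTorus n w := by
    rintro z w ⟨ε, hprod, hw⟩
    have hfm : fmapTorus n z = fmapTorus n w := by
      ext j
      induction j using Fin.lastCases with
      | last =>
        rw [fmapTorus_last, fmapTorus_last]
        have hfac : ∀ i, ((w i : ℂ)).im = ((ε i : ℤ) : ℝ) * ((z i : ℂ)).im := by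
          intro i
          rw [hw i]
          rcases Int.units_eq_one_or (ε i) with h | h
          · rw [h, if_pos rfl]; norm_num
          · rw [h, if_neg (by decide : (-1 : ℤˣ) ≠ 1), Complex.conj_im]; push_cast; ring
        have e1 : (∏ i, ((w i : ℂ)).im)
            = (∏ i, ((ε i : ℤ) : ℝ)) * ∏ i, ((z i : ℂ)).im := by
          rw [← Finset.prod_mul_distrib]
          exact Finset.prod_congr rfl fun i _ => hfac i
        have e2 : (∏ i, ((ε i : ℤ) : ℝ)) = 1 := by
          rw [← Int.cast_prod, ← Units.coe_prod, hprod]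
          norm_num
        rw [e1, e2, one_mul]
      | cast i =>
        rw [fmapTorus_castSucc, fmapTorus_castSucc, hw i]
        split_ifs <;> simp [Complex.conj_re]
    exact Subtype.ext (by
      show ‖fmapTorus n z‖⁻¹ • fmapTorus n z = ‖fmapTorus n w‖⁻¹ • fmapTorus n w
      rw [hfm])
  let Φ := Quot.lift (fsphTorus n) hresp
  have hcont : Continuous Φ := continuous_quot_lift _ (fsphTorus_continuous n)
  have hinj : Function.Injective Φ := by
    intro q1 q2
    obtain ⟨z, rfl⟩ := Quot.exists_rep q1
    obtain ⟨w, rfl⟩ := Quot.exists_rep q2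
    intro h
    apply Quot.sound
    have h' : (fsphTorus n z : EuclideanSpace ℝ (Fin (n+1)))
        = (fsphTorus n w : EuclideanSpace ℝ (Fin (n+1))) := congrArg Subtype.val h
    exact rel_of_fmapTorus_eq z w (fmapTorus_eq_of_norm z w h')
  have hsurj : Function.Surjective Φ := by
    intro u
    have hu : ∑ j, (u : EuclideanSpace ℝ (Fin (n+1))) j ^ 2 = 1 := by
      have h := mem_sphere_zero_iff_norm.mp u.2
      rw [EuclideanSpace.norm_eq] at h
      have h2 := Real.sqrt_eq_one.mp h
      simpa [Real.norm_eq_abs, sq_abs] using h2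
    obtain ⟨z, t, htpos, hft⟩ := exists_fmapTorus_smul hn u hu
    have hval : (fsphTorus n z : EuclideanSpace ℝ (Fin (n+1)))
        = (u : EuclideanSpace ℝ (Fin (n+1))) := by
      show ‖fmapTorus n z‖⁻¹ • fmapTorus n z = (u : EuclideanSpace ℝ (Fin (n+1)))
      rw [hft, norm_smul, Real.norm_eq_abs, _root_.abs_of_pos htpos,
        mem_sphere_zero_iff_norm.mp u.2, mul_one, smul_smul,
        inv_mul_cancel₀ htpos.ne', one_smul]
    exact ⟨Quot.mk _ z, Subtype.ext hval⟩
  exact ⟨Continuous.homeoOfEquivCompactToT2 (f := Equiv.ofBijective Φ ⟨hinj, hsurj⟩) hcont⟩
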